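/- Let σ ∈ (1,2), and let ν be a Borel measure on ℝ^d satisfying ν(B_r^c) ≤ Λ r^{-σ} for all r > 0 with Λ ≥ 1. Define m(ξ) = ∫_{ℝ^d} (e^{i ξ·y} − 1 − i ξ·y) dν(y). Then there is a constant N = N(σ, Λ) such that |m(ξ)| ≤ N |ξ|^σ for all ξ ∈ ℝ^d. -/

import Mathlib

open MeasureTheory Metric Set
open scoped InnerProductSpace

noncomputable section

/-- Elementary bound: `‖e^{ix} - 1 - ix‖ ≤ 4 min(|x|, x²)` for all real `x`. -/
lemma aux_exp_bound (x : ℝ) :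
    ‖Complex.exp (Complex.I * x) - 1 - Complex.I * x‖ ≤ 4 * min |x| (x ^ 2) := by
  rcases le_or_gt |x| 1 with h | h
  · have hz : ‖Complex.I * (x:ℂ)‖ ≤ 1 := by simpa using h
    have hb := Complex.exp_bound hz (n := 2) (by norm_num)
    have hsum : ∑ i ∈ Finset.range 2, (Complex.I * (x:ℂ)) ^ i / i.factorial
        = 1 + Complex.I * x := by
      simp [Finset.sum_range_succ]
    rw [hsum] at hb
    have habs : ‖Complex.I * (x:ℂ)‖ = |x| := by simp
    have hmin : min |x| (x ^ 2) = x ^ 2 := by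
      apply min_eq_right
      calc x ^ 2 = |x| ^ 2 := (sq_abs x).symm
        _ ≤ |x| * 1 := by nlinarith [abs_nonneg x]
        _ = |x| := mul_one _
    rw [hmin]
    rw [habs] at hb
    norm_num [Nat.factorial] at hb
    have hx2 : |x| ^ 2 = x ^ 2 := sq_abs x
    have hgoal : ‖Complex.exp (Complex.I * x) - 1 - Complex.I * x‖
        = ‖Complex.exp (Complex.I * x) - (1 + Complex.I * x)‖ := by
      rw [sub_sub]
    rw [hgoal]
    nlinarith [sq_nonneg x, hb, norm_nonneg (Complex.exp (Complex.I * x) - (1 + Complex.I * x))]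
  · have hmin : min |x| (x ^ 2) = |x| := by
      apply min_eq_left
      calc |x| = |x| * 1 := (mul_one _).symm
        _ ≤ |x| * |x| := by nlinarith [abs_nonneg x]
        _ = x ^ 2 := by rw [← sq_abs x]; ring
    rw [hmin]
    have h1 : ‖Complex.exp (Complex.I * x)‖ = 1 := by
      rw [mul_comm]; exact Complex.norm_exp_ofReal_mul_I x
    have h2 : ‖Complex.I * (x:ℂ)‖ = |x| := by simp
    calc ‖Complex.exp (Complex.I * x) - 1 - Complex.I * x‖
        ≤ ‖Complex.exp (Complex.I * x) - 1‖ + ‖Complex.I * (x:ℂ)‖ := norm_sub_le _ _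
      _ ≤ (‖Complex.exp (Complex.I * x)‖ + ‖(1:ℂ)‖) + ‖Complex.I * (x:ℂ)‖ := by
          gcongr; exact norm_sub_le _ _
      _ = 2 + |x| := by rw [h1, h2, norm_one]; ring
      _ ≤ 4 * |x| := by nlinarith
/-- Symbol bound for a Lévy measure of order `σ ∈ (1,2)`:
`|∫ (e^{i ξ·y} - 1 - i ξ·y) ν(dy)| ≤ N |ξ|^σ`. -/
theorem stmt_3 (d : ℕ) (ν : Measure (EuclideanSpace ℝ (Fin d)))
    (σ Λ : ℝ) (hσ : σ ∈ Set.Ioo (1:ℝ) 2) (hΛ : 1 ≤ Λ)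
    (h0 : ν {0} = 0)
    (hν : ∀ r : ℝ, 0 < r → ν {y | r < ‖y‖} ≤ ENNReal.ofReal (Λ * r ^ (-σ))) :
    ∃ N : ℝ, 0 < N ∧ ∀ ξ : EuclideanSpace ℝ (Fin d),
      ‖∫ y, (Complex.exp (Complex.I * (⟪ξ, y⟫_ℝ : ℂ)) - 1
          - Complex.I * (⟪ξ, y⟫_ℝ : ℂ)) ∂ν‖ ≤ N * ‖ξ‖ ^ σ := by
  obtain ⟨hσ1, hσ2⟩ := hσ
  have hΛ0 : (0:ℝ) < Λ := by linarith
  set K₁ : ℝ := ∫ t in Ioc (0:ℝ) 1, t ^ (-(σ/2)) with hK₁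
  set K₂ : ℝ := ∫ t in Ioi (1:ℝ), t ^ (-σ) with hK₂
  have hK₁0 : 0 ≤ K₁ :=
    setIntegral_nonneg measurableSet_Ioc fun t ht => Real.rpow_nonneg ht.1.le _
  have hK₂0 : 0 ≤ K₂ :=
    setIntegral_nonneg measurableSet_Ioi fun t ht =>
      Real.rpow_nonneg (by linarith [ht.out] : (0:ℝ) ≤ t) _
  have hint₁ : IntegrableOn (fun t : ℝ => t ^ (-(σ/2))) (Ioc 0 1) :=
    (intervalIntegrable_iff_integrableOn_Ioc_of_le zero_le_one).1
      (intervalIntegral.intervalIntegrable_rpow' (by linarith))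
  have hint₂ : IntegrableOn (fun t : ℝ => t ^ (-σ)) (Ioi 1) :=
    integrableOn_Ioi_rpow_of_lt (by linarith) zero_lt_one
  set N : ℝ := Λ * (2 ^ σ * K₁ + 4 ^ σ * K₂) + 1 with hN
  have hNpos : 0 < N := by
    have h2 : (0:ℝ) ≤ 2 ^ σ * K₁ := mul_nonneg (Real.rpow_nonneg (by norm_num) _) hK₁0
    have h4 : (0:ℝ) ≤ 4 ^ σ * K₂ := mul_nonneg (Real.rpow_nonneg (by norm_num) _) hK₂0
    nlinarith
  refine ⟨N, hNpos, fun ξ => ?_⟩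
  by_cases hξ : ξ = 0
  · simp [hξ, Real.zero_rpow (by linarith : σ ≠ 0)]
  have hc : 0 < ‖ξ‖ := norm_pos_iff.mpr hξ
  set c : ℝ := ‖ξ‖ with hcdef
  have hcσ : (0:ℝ) ≤ c ^ σ := Real.rpow_nonneg hc.le σ
  set f : EuclideanSpace ℝ (Fin d) → ℂ := fun y =>
    Complex.exp (Complex.I * (⟪ξ, y⟫_ℝ : ℂ)) - 1 - Complex.I * (⟪ξ, y⟫_ℝ : ℂ) with hf
  set g : EuclideanSpace ℝ (Fin d) → ℝ := fun y =>
    4 * min (c * ‖y‖) ((c * ‖y‖) ^ 2) with hg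
  have hg0 : ∀ y, 0 ≤ g y := by
    intro y
    have h1 : 0 ≤ c * ‖y‖ := mul_nonneg hc.le (norm_nonneg y)
    have h2 : 0 ≤ (c * ‖y‖) ^ 2 := sq_nonneg _
    have := le_min h1 h2
    simp only [hg]; linarith
  have hfg : ∀ y, ‖f y‖ ≤ g y := by
    intro y
    have h1 := aux_exp_bound (⟪ξ, y⟫_ℝ)
    have h2 : |⟪ξ, y⟫_ℝ| ≤ c * ‖y‖ := abs_real_inner_le_norm ξ y
    have h3 : (⟪ξ, y⟫_ℝ) ^ 2 ≤ (c * ‖y‖) ^ 2 := by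
      rw [← sq_abs]
      exact pow_le_pow_left₀ (abs_nonneg _) h2 2
    have hm : min |⟪ξ, y⟫_ℝ| ((⟪ξ, y⟫_ℝ) ^ 2) ≤ min (c * ‖y‖) ((c * ‖y‖) ^ 2) :=
      min_le_min h2 h3
    simp only [hf, hg]
    calc ‖Complex.exp (Complex.I * (⟪ξ, y⟫_ℝ : ℂ)) - 1 - Complex.I * (⟪ξ, y⟫_ℝ : ℂ)‖
        ≤ 4 * min |⟪ξ, y⟫_ℝ| ((⟪ξ, y⟫_ℝ) ^ 2) := h1
      _ ≤ 4 * min (c * ‖y‖) ((c * ‖y‖) ^ 2) := by linarith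
  have hgc : Continuous g := by
    apply Continuous.mul continuous_const
    exact ((continuous_const.mul continuous_norm).min
      ((continuous_const.mul continuous_norm).pow 2))
  have step1 : ‖∫ y, f y ∂ν‖ ≤ (∫⁻ y, ENNReal.ofReal ‖f y‖ ∂ν).toReal :=
    norm_integral_le_lintegral_norm f
  have step2 : ∫⁻ y, ENNReal.ofReal ‖f y‖ ∂ν ≤ ∫⁻ y, ENNReal.ofReal (g y) ∂ν :=
    lintegral_mono fun y => ENNReal.ofReal_le_ofReal (hfg y)
  have step3 : ∫⁻ y, ENNReal.ofReal (g y) ∂ν = ∫⁻ t in Ioi (0:ℝ), ν {y | t < g y} :=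
    lintegral_eq_lintegral_meas_lt ν (Filter.Eventually.of_forall hg0) hgc.aemeasurable
  -- tail bound on (0,1]
  have tail1 : ∀ t ∈ Ioc (0:ℝ) 1, ν {y | t < g y}
      ≤ ENNReal.ofReal ((Λ * (2 ^ σ * c ^ σ)) * t ^ (-(σ/2))) := by
    rintro t ⟨ht0, _⟩
    set r : ℝ := Real.sqrt t / (2 * c) with hr
    have hrpos : 0 < r := div_pos (Real.sqrt_pos.mpr ht0) (by linarith)
    have hsub : {y | t < g y} ⊆ {y | r < ‖y‖} := by
      intro y hy
      simp only [mem_setOf_eq, hg] at hy ⊢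
      have hmr := min_le_right (c * ‖y‖) ((c * ‖y‖) ^ 2)
      have h1 : t < 4 * (c * ‖y‖) ^ 2 := by nlinarith
      have hnn : 0 ≤ 2 * (c * ‖y‖) := by positivity
      have h3 : Real.sqrt t < 2 * (c * ‖y‖) := by
        calc Real.sqrt t < Real.sqrt ((2 * (c * ‖y‖)) ^ 2) :=
              Real.sqrt_lt_sqrt ht0.le (by nlinarith)
          _ = 2 * (c * ‖y‖) := Real.sqrt_sq hnn
      rw [hr, div_lt_iff₀ (by linarith : (0:ℝ) < 2 * c)]
      nlinarith
    have heq : Λ * r ^ (-σ) = (Λ * (2 ^ σ * c ^ σ)) * t ^ (-(σ/2)) := by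
      have h2c : (0:ℝ) ≤ 2 * c := by linarith
      have e1 : (Real.sqrt t) ^ (-σ) = t ^ (-(σ/2)) := by
        rw [Real.sqrt_eq_rpow, ← Real.rpow_mul ht0.le]
        congr 1; ring
      have e2 : (2 * c) ^ (-σ) = ((2:ℝ) ^ σ * c ^ σ)⁻¹ := by
        rw [Real.rpow_neg h2c, Real.mul_rpow (by norm_num) hc.le]
      rw [hr, Real.div_rpow (Real.sqrt_nonneg t) h2c, e1, e2, div_eq_mul_inv, inv_inv]
      ring
    calc ν {y | t < g y} ≤ ν {y | r < ‖y‖} := measure_mono hsub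
      _ ≤ ENNReal.ofReal (Λ * r ^ (-σ)) := hν r hrpos
      _ = _ := by rw [heq]
  -- tail bound on (1,∞)
  have tail2 : ∀ t ∈ Ioi (1:ℝ), ν {y | t < g y}
      ≤ ENNReal.ofReal ((Λ * (4 ^ σ * c ^ σ)) * t ^ (-σ)) := by
    intro t ht
    have ht1 : (1:ℝ) < t := ht
    have ht0 : (0:ℝ) < t := by linarith
    set r : ℝ := t / (4 * c) with hr
    have hrpos : 0 < r := div_pos ht0 (by linarith)
    have hsub : {y | t < g y} ⊆ {y | r < ‖y‖} := by
      intro y hy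
      simp only [mem_setOf_eq, hg] at hy ⊢
      have hml := min_le_left (c * ‖y‖) ((c * ‖y‖) ^ 2)
      have h1 : t < 4 * (c * ‖y‖) := by nlinarith
      rw [hr, div_lt_iff₀ (by linarith : (0:ℝ) < 4 * c)]
      nlinarith
    have heq : Λ * r ^ (-σ) = (Λ * (4 ^ σ * c ^ σ)) * t ^ (-σ) := by
      have h4c : (0:ℝ) ≤ 4 * c := by linarith
      have e2 : (4 * c) ^ (-σ) = ((4:ℝ) ^ σ * c ^ σ)⁻¹ := by
        rw [Real.rpow_neg h4c, Real.mul_rpow (by norm_num) hc.le]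
      rw [hr, Real.div_rpow ht0.le h4c, e2, div_eq_mul_inv, inv_inv]
      ring
    calc ν {y | t < g y} ≤ ν {y | r < ‖y‖} := measure_mono hsub
      _ ≤ ENNReal.ofReal (Λ * r ^ (-σ)) := hν r hrpos
      _ = _ := by rw [heq]
  have hA : (0:ℝ) ≤ Λ * (2 ^ σ * c ^ σ) :=
    mul_nonneg hΛ0.le (mul_nonneg (Real.rpow_nonneg (by norm_num) _) hcσ)
  have hB : (0:ℝ) ≤ Λ * (4 ^ σ * c ^ σ) :=
    mul_nonneg hΛ0.le (mul_nonneg (Real.rpow_nonneg (by norm_num) _) hcσ)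
  -- integrate the tails
  have int1 : ∫⁻ t in Ioc (0:ℝ) 1, ν {y | t < g y}
      ≤ ENNReal.ofReal (Λ * (2 ^ σ * c ^ σ)) * ENNReal.ofReal K₁ := by
    calc ∫⁻ t in Ioc (0:ℝ) 1, ν {y | t < g y}
        ≤ ∫⁻ t in Ioc (0:ℝ) 1,
            ENNReal.ofReal ((Λ * (2 ^ σ * c ^ σ)) * t ^ (-(σ/2))) :=
          lintegral_mono_ae (by
            filter_upwards [ae_restrict_mem measurableSet_Ioc] with t ht using tail1 t ht)
      _ = ENNReal.ofReal (Λ * (2 ^ σ * c ^ σ))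
            * ∫⁻ t in Ioc (0:ℝ) 1, ENNReal.ofReal (t ^ (-(σ/2))) := by
          rw [← lintegral_const_mul' _ _ ENNReal.ofReal_ne_top]
          exact lintegral_congr fun t => ENNReal.ofReal_mul hA
      _ = ENNReal.ofReal (Λ * (2 ^ σ * c ^ σ)) * ENNReal.ofReal K₁ := by
          congr 1
          refine (ofReal_integral_eq_lintegral_ofReal hint₁ ?_).symm
          filter_upwards [ae_restrict_mem measurableSet_Ioc] with t ht
          exact Real.rpow_nonneg ht.1.le _
  have int2 : ∫⁻ t in Ioi (1:ℝ), ν {y | t < g y}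
      ≤ ENNReal.ofReal (Λ * (4 ^ σ * c ^ σ)) * ENNReal.ofReal K₂ := by
    calc ∫⁻ t in Ioi (1:ℝ), ν {y | t < g y}
        ≤ ∫⁻ t in Ioi (1:ℝ), ENNReal.ofReal ((Λ * (4 ^ σ * c ^ σ)) * t ^ (-σ)) :=
          lintegral_mono_ae (by
            filter_upwards [ae_restrict_mem measurableSet_Ioi] with t ht using tail2 t ht)
      _ = ENNReal.ofReal (Λ * (4 ^ σ * c ^ σ))
            * ∫⁻ t in Ioi (1:ℝ), ENNReal.ofReal (t ^ (-σ)) := by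
          rw [← lintegral_const_mul' _ _ ENNReal.ofReal_ne_top]
          exact lintegral_congr fun t => ENNReal.ofReal_mul hB
      _ = ENNReal.ofReal (Λ * (4 ^ σ * c ^ σ)) * ENNReal.ofReal K₂ := by
          congr 1
          refine (ofReal_integral_eq_lintegral_ofReal hint₂ ?_).symm
          filter_upwards [ae_restrict_mem measurableSet_Ioi] with t ht
          exact Real.rpow_nonneg (by linarith [ht.out] : (0:ℝ) ≤ t) _
  have step4 : ∫⁻ t in Ioi (0:ℝ), ν {y | t < g y}
      = (∫⁻ t in Ioc (0:ℝ) 1, ν {y | t < g y})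
        + ∫⁻ t in Ioi (1:ℝ), ν {y | t < g y} := by
    rw [← Ioc_union_Ioi_eq_Ioi (zero_le_one (α := ℝ)),
      lintegral_union measurableSet_Ioi (Ioc_disjoint_Ioi le_rfl)]
  have total : ∫⁻ y, ENNReal.ofReal ‖f y‖ ∂ν ≤ ENNReal.ofReal (N * c ^ σ) := by
    refine step2.trans ?_
    rw [step3, step4]
    refine (add_le_add int1 int2).trans ?_
    rw [← ENNReal.ofReal_mul hA, ← ENNReal.ofReal_mul hB,
      ← ENNReal.ofReal_add (mul_nonneg hA hK₁0) (mul_nonneg hB hK₂0)]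
    apply ENNReal.ofReal_le_ofReal
    have e : N * c ^ σ - (Λ * (2 ^ σ * c ^ σ) * K₁ + Λ * (4 ^ σ * c ^ σ) * K₂)
        = c ^ σ := by rw [hN]; ring
    linarith
  refine step1.trans ?_
  exact ENNReal.toReal_le_of_le_ofReal (mul_nonneg hNpos.le hcσ) total
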